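/- arXiv:2002.08818 — 2 statements merged into one kernel-verified Lean document; each statement's English description precedes it below -/
import Mathlib

section
/- Let d ≥ 1, R > 0, kε > 0, σ > 0, p_atm ∈ ℝ. On ℝᵈ \ {0} define the interface field b(x) = −(x / (√π · kε · R · ‖x‖)) · exp(−((‖x‖/R − 1)/kε)²), the capillary stress tensor Ω(x) = σ ‖b(x)‖ (b(x) b(x)ᵀ / ‖b(x)‖² − I), and the pressure p(x) = p_atm + (d − 1)(σ/R) ∫_{‖x‖/R}^∞ (1/(√π · kε · s)) exp(−((s − 1)/kε)²) ds. Then for every x ≠ 0 the equilibrium momentum balance holds: ∇p(x) + (∇·Ω)(x) = 0, where (∇·Ω)ᵢ = Σⱼ ∂ⱼ Ωᵢⱼ. In particular, the constructed droplet state is an exact mechanical equilibrium of the surface-tension model. -/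
open MeasureTheory

set_option maxHeartbeats 1000000 in
/-- Exact mechanical equilibrium of the diffuse-interface droplet: with the
interface field `b(x) = −(x/(√π kε R ‖x‖)) exp(−((‖x‖/R − 1)/kε)²)`, the
capillary stress tensor `Ω = σ‖b‖(b bᵀ/‖b‖² − I)` and the pressure
`p(x) = p_atm + (d−1)(σ/R) ∫_{‖x‖/R}^∞ exp(−((s−1)/kε)²)/(√π kε s) ds`,
the momentum balance `∇p(x) + (∇·Ω)(x) = 0` holds for every `x ≠ 0`. -/
theorem droplet_equilibrium_momentum_balance (d : ℕ) (hd : 1 ≤ d)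
    (R kε σ p_atm : ℝ) (hR : 0 < R) (hkε : 0 < kε) (hσ : 0 < σ) :
    let b : EuclideanSpace ℝ (Fin d) → EuclideanSpace ℝ (Fin d) := fun x =>
      (-(1 / (Real.sqrt π * kε * R * ‖x‖)) *
        Real.exp (-(((‖x‖ / R - 1) / kε) ^ 2))) • x
    let Ω : EuclideanSpace ℝ (Fin d) → Matrix (Fin d) (Fin d) ℝ := fun x =>
      Matrix.of fun i j =>
        σ * ‖b x‖ * (b x i * b x j / ‖b x‖ ^ 2 - if i = j then 1 else 0)
    let p : EuclideanSpace ℝ (Fin d) → ℝ := fun x =>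
      p_atm + ((d : ℝ) - 1) * (σ / R) *
        ∫ s in Set.Ioi (‖x‖ / R),
          (1 / (Real.sqrt π * kε * s)) * Real.exp (-(((s - 1) / kε) ^ 2))
    ∀ x : EuclideanSpace ℝ (Fin d), x ≠ 0 → ∀ i : Fin d,
      fderiv ℝ p x (EuclideanSpace.single i 1) +
        (∑ j, fderiv ℝ (fun y => Ω y i j) x (EuclideanSpace.single j 1)) = 0 := by
  intro b Ω p x hx i
  by_cases hzero : Real.sqrt π = 0
  · -- degenerate case: √π = 0, everything vanishes
    have hΩ0 : ∀ j : Fin d, (fun y => Ω y i j) = fun _ => (0:ℝ) := by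
      intro j; funext y
      show σ * ‖b y‖ * (b y i * b y j / ‖b y‖ ^ 2 - if i = j then 1 else 0) = 0
      have hb0 : b y = 0 := by
        show (-(1 / (Real.sqrt π * kε * R * ‖y‖)) *
          Real.exp (-(((‖y‖ / R - 1) / kε) ^ 2))) • y = 0
        rw [hzero]; simp
      rw [hb0]; simp
    have hp0 : p = fun _ => p_atm + ((d : ℝ) - 1) * (σ / R) * 0 := by
      funext y
      show p_atm + ((d : ℝ) - 1) * (σ / R) *
        ∫ s in Set.Ioi (‖y‖ / R),
          (1 / (Real.sqrt π * kε * s)) * Real.exp (-(((s - 1) / kε) ^ 2)) = _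
      congr 2
      rw [show (fun s => (1 / (Real.sqrt π * kε * s)) *
          Real.exp (-(((s - 1) / kε) ^ 2))) = fun _ : ℝ => (0:ℝ) by
        funext s; rw [hzero]; simp]
      simp
    rw [hp0]
    simp only [hΩ0, fderiv_const]
    simp
  · -- main case: √π > 0
    have hsp : 0 < Real.sqrt π := lt_of_le_of_ne (Real.sqrt_nonneg π) (Ne.symm hzero)
    have hr : (0:ℝ) < ‖x‖ := norm_pos_iff.mpr hx
    set A : ℝ → ℝ :=
      fun t => Real.exp (-(((t / R - 1) / kε) ^ 2)) / (Real.sqrt π * kε * R) with hAdef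
    -- norm of b
    have hbn : ∀ y : EuclideanSpace ℝ (Fin d), y ≠ 0 → ‖b y‖ = A ‖y‖ := by
      intro y hy
      have hny : (0:ℝ) < ‖y‖ := norm_pos_iff.mpr hy
      have hby : b y = (-(1 / (Real.sqrt π * kε * R * ‖y‖)) *
          Real.exp (-(((‖y‖ / R - 1) / kε) ^ 2))) • y := rfl
      rw [hby, norm_smul, Real.norm_eq_abs, abs_mul, abs_neg,
        abs_of_pos (by positivity : (0:ℝ) < 1 / (Real.sqrt π * kε * R * ‖y‖)),
        abs_of_pos (Real.exp_pos _), hAdef]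
      field_simp
    -- quotient simplification for entries
    have hentry : ∀ y : EuclideanSpace ℝ (Fin d), y ≠ 0 → ∀ k l : Fin d,
        b y k * b y l / ‖b y‖ ^ 2 = y k * y l * (‖y‖ ^ 2)⁻¹ := by
      intro y hy k l
      have hny : (0:ℝ) < ‖y‖ := norm_pos_iff.mpr hy
      set c : ℝ := -(1 / (Real.sqrt π * kε * R * ‖y‖)) *
        Real.exp (-(((‖y‖ / R - 1) / kε) ^ 2)) with hc
      have hcneg : c < 0 := by
        rw [hc, neg_mul]
        exact neg_lt_zero.mpr (by positivity)
      have hbyk : ∀ m : Fin d, b y m = c * y m := fun m => rfl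
      have hbnorm2 : ‖b y‖ ^ 2 = c ^ 2 * ‖y‖ ^ 2 := by
        have hby : b y = c • y := rfl
        rw [hby, norm_smul, mul_pow, Real.norm_eq_abs, sq_abs]
      rw [hbyk k, hbyk l, hbnorm2,
        show c * y k * (c * y l) = c ^ 2 * (y k * y l) by ring,
        mul_div_mul_left _ _ (pow_ne_zero 2 (ne_of_lt hcneg)), div_eq_mul_inv]
    -- derivative of the squared norm
    have h1 : HasFDerivAt (fun y : EuclideanSpace ℝ (Fin d) => ‖y‖ ^ 2)
        ((2 : ℝ) • (innerSL ℝ x)) x := by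
      have h0 := (hasFDerivAt_id x).norm_sq
      refine h0.congr_fderiv ?_
      ext w; simp
    -- derivative of the norm
    have hN : HasFDerivAt (fun y : EuclideanSpace ℝ (Fin d) => ‖y‖)
        (‖x‖⁻¹ • (innerSL ℝ x)) x := by
      have h2 : HasDerivAt Real.sqrt (1 / (2 * Real.sqrt (‖x‖ ^ 2))) (‖x‖ ^ 2) :=
        Real.hasDerivAt_sqrt (by positivity)
      have h3 := h2.comp_hasFDerivAt x h1
      have he : (fun y : EuclideanSpace ℝ (Fin d) => Real.sqrt (‖y‖ ^ 2)) =
          fun y => ‖y‖ := by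
        funext y; exact Real.sqrt_sq (norm_nonneg y)
      rw [Function.comp_def, he] at h3
      refine h3.congr_fderiv ?_
      rw [smul_smul, Real.sqrt_sq (norm_nonneg x)]
      congr 1
      field_simp
    have hAdiff : DifferentiableAt ℝ A ‖x‖ := by rw [hAdef]; fun_prop
    have hAN : HasFDerivAt (fun y : EuclideanSpace ℝ (Fin d) => A ‖y‖)
        (deriv A ‖x‖ • (‖x‖⁻¹ • (innerSL ℝ x))) x :=
      (hAdiff.hasDerivAt).comp_hasFDerivAt x hN
    have hproj : ∀ k : Fin d, HasFDerivAt (fun y : EuclideanSpace ℝ (Fin d) => y k)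
        (EuclideanSpace.proj k : EuclideanSpace ℝ (Fin d) →L[ℝ] ℝ) x := fun k => by
      have h := (EuclideanSpace.proj k : EuclideanSpace ℝ (Fin d) →L[ℝ] ℝ).hasFDerivAt (x := x)
      have he : ⇑(EuclideanSpace.proj k : EuclideanSpace ℝ (Fin d) →L[ℝ] ℝ) =
          fun y : EuclideanSpace ℝ (Fin d) => y k := rfl
      rwa [he] at h
    have hQinv := (hasDerivAt_inv (by positivity : (‖x‖ ^ 2 : ℝ) ≠ 0)).comp_hasFDerivAt x h1
    simp only [Function.comp_def] at hQinv
    have hpr : ∀ k l : Fin d, (EuclideanSpace.proj k : EuclideanSpace ℝ (Fin d) →L[ℝ] ℝ)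
        (EuclideanSpace.single l 1) = if k = l then 1 else 0 :=
      fun k l => EuclideanSpace.single_apply l 1 k
    -- value of the divergence of each Ω entry
    have hval : ∀ j : Fin d,
        fderiv ℝ (fun y => Ω y i j) x (EuclideanSpace.single j 1) =
        σ * A ‖x‖ * ((x i * x j) * (-((‖x‖ ^ 2) ^ 2)⁻¹ * (2 * x j))
            + (‖x‖ ^ 2)⁻¹ * (x i * 1 + x j * (if i = j then 1 else 0)))
          + (x i * x j * (‖x‖ ^ 2)⁻¹ - if i = j then 1 else 0) *
            (σ * (deriv A ‖x‖ * (‖x‖⁻¹ * x j))) := by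
      intro j
      have hEq : (fun y => Ω y i j) =ᶠ[nhds x] fun y : EuclideanSpace ℝ (Fin d) =>
          σ * A ‖y‖ * (y i * y j * (‖y‖ ^ 2)⁻¹ - if i = j then 1 else 0) := by
        filter_upwards [isOpen_compl_singleton.mem_nhds hx] with y hy
        have hy' : y ≠ 0 := hy
        show σ * ‖b y‖ * (b y i * b y j / ‖b y‖ ^ 2 - if i = j then 1 else 0) = _
        rw [hentry y hy' i j, hbn y hy']
      rw [hEq.fderiv_eq]
      have hm := (((hproj i).mul (hproj j)).mul hQinv).sub_const (if i = j then (1:ℝ) else 0)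
      have hfull := (hAN.const_mul σ).mul hm
      rw [HasFDerivAt.fderiv (f := fun y : EuclideanSpace ℝ (Fin d) =>
          σ * A ‖y‖ * (y i * y j * (‖y‖ ^ 2)⁻¹ - if i = j then 1 else 0)) hfull]
      simp only [ContinuousLinearMap.add_apply, ContinuousLinearMap.smul_apply,
        ContinuousLinearMap.comp_apply, ContinuousLinearMap.coe_id', id_eq, innerSL_apply_apply,
        smul_eq_mul, nsmul_eq_mul, Nat.cast_ofNat, EuclideanSpace.single_apply,
        EuclideanSpace.inner_single_right, conj_trivial, hpr, eq_self_iff_true, if_true, id, Pi.mul_apply]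
      ring
    -- canonical form of each summand
    set α : ℝ := σ * A ‖x‖ * (-((‖x‖ ^ 2) ^ 2)⁻¹ * 2) * x i
      + σ * deriv A ‖x‖ * ‖x‖⁻¹ * (‖x‖ ^ 2)⁻¹ * x i with hα
    set β : ℝ := σ * A ‖x‖ * (‖x‖ ^ 2)⁻¹ - σ * deriv A ‖x‖ * ‖x‖⁻¹ with hβ
    set cc : ℝ := σ * A ‖x‖ * (‖x‖ ^ 2)⁻¹ * x i with hcc
    have hcanon : ∀ j : Fin d,
        σ * A ‖x‖ * ((x i * x j) * (-((‖x‖ ^ 2) ^ 2)⁻¹ * (2 * x j))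
            + (‖x‖ ^ 2)⁻¹ * (x i * 1 + x j * (if i = j then 1 else 0)))
          + (x i * x j * (‖x‖ ^ 2)⁻¹ - if i = j then 1 else 0) *
            (σ * (deriv A ‖x‖ * (‖x‖⁻¹ * x j)))
        = α * (x j * x j) + β * (if i = j then x j else 0) + cc := by
      intro j
      by_cases h : i = j
      · simp only [h, if_true, hα, hβ, hcc]; ring
      · simp only [h, if_false, hα, hβ, hcc]; ring
    have hxx : ∑ j : Fin d, x j * x j = ‖x‖ ^ 2 := by
      have h := real_inner_self_eq_norm_sq x
      rw [← h]
      rw [PiLp.inner_apply]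
      simp [RCLike.inner_apply, conj_trivial, mul_comm, sq]
    have hsum : (∑ j, fderiv ℝ (fun y => Ω y i j) x (EuclideanSpace.single j 1))
        = α * ‖x‖ ^ 2 + β * x i + (d : ℝ) * cc := by
      rw [Finset.sum_congr rfl (fun j _ => (hval j).trans (hcanon j))]
      rw [Finset.sum_add_distrib, Finset.sum_add_distrib, ← Finset.mul_sum, hxx,
        ← Finset.mul_sum, Finset.sum_ite_eq, Finset.sum_const]
      simp only [Finset.mem_univ, if_true, Finset.card_univ, Fintype.card_fin, nsmul_eq_mul]
    -- pressure derivative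
    have hInt : ∀ t : ℝ, 0 < t → IntegrableOn
        (fun s => (1 / (Real.sqrt π * kε * s)) * Real.exp (-(((s - 1) / kε) ^ 2)))
        (Set.Ioi t) := by
      intro t ht
      have hg : Integrable (fun s : ℝ => (1 / (Real.sqrt π * kε * t)) *
          Real.exp (-(kε ^ 2)⁻¹ * (s - 1) ^ 2)) :=
        ((integrable_exp_neg_mul_sq (by positivity)).comp_sub_right 1).const_mul _
      refine Integrable.mono hg.integrableOn ?_ ?_
      · refine (Measurable.aestronglyMeasurable ?_).restrict
        exact ((measurable_const.div (measurable_const.mul measurable_id)).mul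
          (Real.measurable_exp.comp
            (((measurable_id.sub measurable_const).div_const kε).pow_const 2).neg))
      · rw [ae_restrict_iff' measurableSet_Ioi]
        filter_upwards with s hs
        have hst : t < s := hs
        have hs0 : 0 < s := ht.trans hst
        have hexp : -(((s - 1) / kε) ^ 2) = -(kε ^ 2)⁻¹ * (s - 1) ^ 2 := by
          rw [div_pow]; field_simp
        rw [Real.norm_eq_abs, Real.norm_eq_abs, hexp, abs_mul, abs_mul,
          abs_of_pos (by positivity : (0:ℝ) < 1 / (Real.sqrt π * kε * s)),
          abs_of_pos (by positivity : (0:ℝ) < 1 / (Real.sqrt π * kε * t)),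
          abs_of_pos (Real.exp_pos _)]
        gcongr
    have ht₀ : 0 < ‖x‖ / R := by positivity
    have hG : HasDerivAt
        (fun t => ∫ s in Set.Ioi t,
          (1 / (Real.sqrt π * kε * s)) * Real.exp (-(((s - 1) / kε) ^ 2)))
        (-((1 / (Real.sqrt π * kε * (‖x‖ / R))) *
          Real.exp (-((((‖x‖ / R) - 1) / kε) ^ 2)))) (‖x‖ / R) := by
      set h : ℝ → ℝ :=
        fun s => (1 / (Real.sqrt π * kε * s)) * Real.exp (-(((s - 1) / kε) ^ 2)) with hh
      set t₀ : ℝ := ‖x‖ / R with ht₀def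
      have hmeas : Measurable h :=
        ((measurable_const.div (measurable_const.mul measurable_id)).mul
          (Real.measurable_exp.comp
            (((measurable_id.sub measurable_const).div_const kε).pow_const 2).neg))
      have hsplit : ∀ t : ℝ, 0 < t →
          (∫ s in Set.Ioi t, h s) = (∫ s in t..t₀, h s) + ∫ s in Set.Ioi t₀, h s := by
        intro t ht
        rcases le_total t t₀ with hle | hle
        · rw [intervalIntegral.integral_of_le hle]
          rw [← setIntegral_union (Set.Ioc_disjoint_Ioi le_rfl) measurableSet_Ioi
            ((hInt t ht).mono_set Set.Ioc_subset_Ioi_self) (hInt t₀ ht₀),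
            Set.Ioc_union_Ioi_eq_Ioi hle]
        · rw [intervalIntegral.integral_symm, intervalIntegral.integral_of_le hle]
          have h2 := setIntegral_union (Set.Ioc_disjoint_Ioi le_rfl) measurableSet_Ioi
            ((hInt t₀ ht₀).mono_set Set.Ioc_subset_Ioi_self) (hInt t ht)
          rw [Set.Ioc_union_Ioi_eq_Ioi hle] at h2
          rw [h2]; ring
      have hFTC : HasDerivAt (fun t => ∫ s in t..t₀, h s) (-h t₀) t₀ := by
        refine intervalIntegral.integral_hasDerivAt_left (by simp) ?_ ?_
        · exact ⟨Set.univ, Filter.univ_mem, hmeas.aestronglyMeasurable.restrict⟩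
        · have hc1 : ContinuousAt (fun s : ℝ => 1 / (Real.sqrt π * kε * s)) t₀ := by
            apply ContinuousAt.div continuousAt_const (by fun_prop)
            positivity
          exact hc1.mul (by fun_prop)
      have heq : (fun t => ∫ s in Set.Ioi t, h s) =ᶠ[nhds t₀]
          fun t => (∫ s in t..t₀, h s) + ∫ s in Set.Ioi t₀, h s := by
        filter_upwards [Ioi_mem_nhds ht₀] with t ht using hsplit t ht
      exact (hFTC.add_const _).congr_of_eventuallyEq heq
    have hP : HasFDerivAt p
        ((((d : ℝ) - 1) * (σ / R)) •
          ((-((1 / (Real.sqrt π * kε * (‖x‖ / R))) *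
            Real.exp (-((((‖x‖ / R) - 1) / kε) ^ 2)))) •
              (R⁻¹ • (‖x‖⁻¹ • (innerSL ℝ x))))) x := by
      exact ((hG.comp_hasFDerivAt x (hN.mul_const R⁻¹)).const_mul
        (((d : ℝ) - 1) * (σ / R))).const_add p_atm
    have hPval : fderiv ℝ p x (EuclideanSpace.single i 1) =
        (((d : ℝ) - 1) * (σ / R)) *
          ((-((1 / (Real.sqrt π * kε * (‖x‖ / R))) *
            Real.exp (-((((‖x‖ / R) - 1) / kε) ^ 2)))) * (R⁻¹ * (‖x‖⁻¹ * x i))) := by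
      rw [hP.fderiv]
      simp [EuclideanSpace.inner_single_right]
    rw [hPval, hsum, hα, hβ, hcc, hAdef]
    have hrne : ‖x‖ ≠ 0 := ne_of_gt hr
    field_simp
    ring
end

section
/- Let ρ > 0, σ ≥ 0, a ∈ ℝ, and b = (b₁, b₂, b₃) ∈ ℝ³ with ‖b‖ > 0. Define β₁ = b₁/‖b‖, a_σ² = (σ/ρ) ‖b‖ (1 − β₁²), k₁ = (a² + a_σ²)/2, and k₃ = √(k₁² − (1 − β₁²) a² a_σ²). Then the radicand is always nonnegative, because of the identity k₁² − (1 − β₁²) a² a_σ² = ((a² − a_σ²)/2)² + β₁² a² a_σ²; moreover 0 ≤ k₃ ≤ k₁, hence 0 ≤ k₁ − k₃ ≤ k₁ + k₃ ≤ a² + a_σ². Consequently all characteristic speeds u, u ± √(k₁ + k₃), u ± √(k₁ − k₃) of the surface-tension model are real, and the fastest speeds satisfy |√(k₁ ± k₃)| ≤ √(a² + a_σ²). -/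
/-- Reality and boundedness of the characteristic speeds of the
surface-tension model: with `β₁ = b₁/‖b‖`, `a_σ² = (σ/ρ)‖b‖(1−β₁²)`,
`k₁ = (a² + a_σ²)/2`, `k₃ = √(k₁² − (1−β₁²) a² a_σ²)`, the radicand is
nonnegative thanks to
`k₁² − (1−β₁²) a² a_σ² = ((a² − a_σ²)/2)² + β₁² a² a_σ²`, one has
`0 ≤ k₃ ≤ k₁` and `0 ≤ k₁ − k₃ ≤ k₁ + k₃ ≤ a² + a_σ²`; hence all the
characteristic speeds `u`, `u ± √(k₁ ± k₃)` are real and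
`√(k₁ ± k₃) ≤ √(a² + a_σ²)`. -/
theorem surface_tension_characteristic_speeds_real
    (ρ σ a : ℝ) (hρ : 0 < ρ) (hσ : 0 ≤ σ)
    (b : EuclideanSpace ℝ (Fin 3)) (hb : 0 < ‖b‖) :
    let β₁ : ℝ := b 0 / ‖b‖
    let aσsq : ℝ := (σ / ρ) * ‖b‖ * (1 - β₁ ^ 2)
    let k₁ : ℝ := (a ^ 2 + aσsq) / 2
    let k₃ : ℝ := Real.sqrt (k₁ ^ 2 - (1 - β₁ ^ 2) * a ^ 2 * aσsq)
    k₁ ^ 2 - (1 - β₁ ^ 2) * a ^ 2 * aσsq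
        = ((a ^ 2 - aσsq) / 2) ^ 2 + β₁ ^ 2 * a ^ 2 * aσsq ∧
    0 ≤ k₃ ∧ k₃ ≤ k₁ ∧
    0 ≤ k₁ - k₃ ∧ k₁ - k₃ ≤ k₁ + k₃ ∧ k₁ + k₃ ≤ a ^ 2 + aσsq ∧
    |Real.sqrt (k₁ + k₃)| ≤ Real.sqrt (a ^ 2 + aσsq) ∧
    |Real.sqrt (k₁ - k₃)| ≤ Real.sqrt (a ^ 2 + aσsq) := by
  intro β₁ aσsq k₁ k₃
  have hb0 : (b 0) ^ 2 ≤ ‖b‖ ^ 2 := by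
    have h1 : ‖b‖ ^ 2 = ∑ i, (b i) ^ 2 := by
      rw [EuclideanSpace.norm_eq]
      rw [Real.sq_sqrt (by positivity)]
      simp [sq_abs]
    rw [h1]
    exact Finset.single_le_sum (fun i _ => sq_nonneg (b i)) (Finset.mem_univ 0)
  have hβ : β₁ ^ 2 ≤ 1 := by
    have : β₁ ^ 2 = (b 0) ^ 2 / ‖b‖ ^ 2 := by simp [β₁, div_pow]
    rw [this]
    exact div_le_one_of_le₀ hb0 (by positivity)
  have hβ0 : 0 ≤ 1 - β₁ ^ 2 := by linarith
  have haσ : 0 ≤ aσsq := by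
    have : 0 ≤ σ / ρ := div_nonneg hσ hρ.le
    positivity
  have hk₁ : 0 ≤ k₁ := by positivity
  have hrad : 0 ≤ (1 - β₁ ^ 2) * a ^ 2 * aσsq := by positivity
  have hid : k₁ ^ 2 - (1 - β₁ ^ 2) * a ^ 2 * aσsq
      = ((a ^ 2 - aσsq) / 2) ^ 2 + β₁ ^ 2 * a ^ 2 * aσsq := by
    simp only [k₁]; ring
  have hk₃0 : 0 ≤ k₃ := Real.sqrt_nonneg _
  have hk₃le : k₃ ≤ k₁ := by
    calc k₃ ≤ Real.sqrt (k₁ ^ 2) := Real.sqrt_le_sqrt (by linarith)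
    _ = k₁ := by rw [Real.sqrt_sq hk₁]
  have hsum : k₁ + k₃ ≤ a ^ 2 + aσsq := by
    have : k₁ + k₃ ≤ 2 * k₁ := by linarith
    simp only [k₁] at this ⊢; linarith
  refine ⟨hid, hk₃0, hk₃le, by linarith, by linarith, hsum, ?_, ?_⟩
  · rw [abs_of_nonneg (Real.sqrt_nonneg _)]
    exact Real.sqrt_le_sqrt hsum
  · rw [abs_of_nonneg (Real.sqrt_nonneg _)]
    exact Real.sqrt_le_sqrt (by linarith)
end
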